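/- Let f_h and f_l be likelihood-ratio experiments on [a_h,b_h] and [a_l,b_l] with 0 ≤ a_h < a_l < b_l < b_h ≤ ∞ satisfying, for each state s ∈ {0,1} and ℓ ∈ (a_l,b_l), f_{l,s}(ℓ)/F_{l,s}(ℓ) > f_{h,s}(ℓ)/F_{h,s}(ℓ) and f_{l,s}(ℓ)/(1−F_{l,s}(ℓ)) > f_{h,s}(ℓ)/(1−F_{h,s}(ℓ)). Fix μ ∈ [1/2,1) and p ∈ (0,1), let H_{t,s}(β) = F_{t,s}((1−μ)β/(μ(1−β))), and let β†_0, β†_1 be the unique crossing beliefs in (β̲_l, β̄_l) at which H_{h,s} = H_{l,s} for s = 0,1. If β†_1 < β†_0, then there exists a unique β ∈ (β†_1, β†_0) satisfying the indifference equation β·[ (1−H_{h,1}(β))/(p(1−H_{h,1}(β))+(1−p)(1−H_{l,1}(β))) − H_{h,1}(β)/(pH_{h,1}(β)+(1−p)H_{l,1}(β)) ] = (1−β)·[ H_{h,0}(β)/(pH_{h,0}(β)+(1−p)H_{l,0}(β)) − (1−H_{h,0}(β))/(p(1−H_{h,0}(β))+(1−p)(1−H_{l,0}(β))) ]. -/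

import Mathlib

open MeasureTheory Set intervalIntegral Filter

/-- State-0 CDF of a likelihood-ratio experiment. -/
noncomputable def F0 (f : ℝ → ℝ) (ℓ : ℝ) : ℝ := ∫ u in (0:ℝ)..ℓ, f u

/-- State-1 CDF of a likelihood-ratio experiment. -/
noncomputable def F1 (f : ℝ → ℝ) (ℓ : ℝ) : ℝ := ∫ u in (0:ℝ)..ℓ, u * f u

/-- State-`s` CDF, `s ∈ {0,1}`. -/
noncomputable def Fs (f : ℝ → ℝ) (s : Fin 2) (ℓ : ℝ) : ℝ :=
  if s = 0 then F0 f ℓ else F1 f ℓ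

/-- State-`s` density, `s ∈ {0,1}`: `f` in state 0 and `ℓ·f(ℓ)` in state 1. -/
noncomputable def fs (f : ℝ → ℝ) (s : Fin 2) (ℓ : ℝ) : ℝ :=
  if s = 0 then f ℓ else ℓ * f ℓ

/-- A likelihood-ratio experiment on `[a, b]` with `0 ≤ a < b ≤ ∞`. -/
structure IsLRExperiment (f : ℝ → ℝ) (a : ℝ) (b : EReal) : Prop where
  a_nonneg : 0 ≤ a
  a_lt_b : (a : EReal) < b
  cont : Continuous f
  pos : ∀ ℓ : ℝ, a < ℓ → (ℓ : EReal) < b → 0 < f ℓ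
  zero_outside : ∀ ℓ : ℝ, (ℓ < a ∨ b < (ℓ : EReal)) → f ℓ = 0
  int_one : (∫ ℓ in Ioi (0:ℝ), f ℓ) = 1
  int_mean : (∫ ℓ in Ioi (0:ℝ), ℓ * f ℓ) = 1

/-- The low type's experiment is noisier: reverse-hazard-rate and hazard-rate dominance
in each state on the interior of the low type's support. -/
def Noisier (fh fl : ℝ → ℝ) (a_l b_l : ℝ) : Prop :=
  ∀ s : Fin 2, ∀ ℓ : ℝ, a_l < ℓ → ℓ < b_l →
    fs fl s ℓ / Fs fl s ℓ > fs fh s ℓ / Fs fh s ℓ ∧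
    fs fl s ℓ / (1 - Fs fl s ℓ) > fs fh s ℓ / (1 - Fs fh s ℓ)

/-- Likelihood-ratio cutoff corresponding to belief `β` under prior `μ`. -/
noncomputable def zOf (μ β : ℝ) : ℝ := (1 - μ) * β / (μ * (1 - β))

/-- Distribution of the posterior state belief conditional on state `s`. -/
noncomputable def H (f : ℝ → ℝ) (μ : ℝ) (s : Fin 2) (β : ℝ) : ℝ :=
  Fs f s (zOf μ β)

/-- Posterior belief induced by likelihood ratio `x` under prior `μ`. -/
noncomputable def betaOf (μ x : ℝ) : ℝ := μ * x / (μ * x + 1 - μ)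

/-- `βd` is the crossing belief in state `s`: it lies in `(β̲_l, β̄_l)` and
`H_{h,s} − H_{l,s}` is positive below it, zero at it, and negative above it on the high
type's belief range (expressed via `betaOf μ a_h < β`, `β < 1`, `z(β) < b_h`). -/
def IsCrossingBelief (fh fl : ℝ → ℝ) (a_h a_l b_l : ℝ) (b_h : EReal)
    (μ : ℝ) (s : Fin 2) (βd : ℝ) : Prop :=
  βd ∈ Set.Ioo (betaOf μ a_l) (betaOf μ b_l) ∧
  ∀ β : ℝ, betaOf μ a_h < β → β < 1 → ((zOf μ β : ℝ) : EReal) < b_h →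
    ((β < βd → H fh μ s β - H fl μ s β > 0) ∧
     (β = βd → H fh μ s β - H fl μ s β = 0) ∧
     (βd < β → H fh μ s β - H fl μ s β < 0))

/-- Left side of the indifference equation: the sender's expected reputational gain from
report 1 over report 0, at state belief `β`, when the market conjectures the `β`-cutoff
strategy profile. -/
noncomputable def indiffLHS (fh fl : ℝ → ℝ) (μ p β : ℝ) : ℝ :=
  β * ((1 - H fh μ 1 β) / (p * (1 - H fh μ 1 β) + (1 - p) * (1 - H fl μ 1 β))
      - H fh μ 1 β / (p * H fh μ 1 β + (1 - p) * H fl μ 1 β))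

/-- Right side of the indifference equation. -/
noncomputable def indiffRHS (fh fl : ℝ → ℝ) (μ p β : ℝ) : ℝ :=
  (1 - β) * (H fh μ 0 β / (p * H fh μ 0 β + (1 - p) * H fl μ 0 β)
      - (1 - H fh μ 0 β) / (p * (1 - H fh μ 0 β) + (1 - p) * (1 - H fl μ 0 β)))


lemma LR.f_nonneg {f a b} (hf : IsLRExperiment f a b) (x : ℝ) : 0 ≤ f x := by
  rcases lt_trichotomy x a with h | h | h
  · exact le_of_eq (hf.zero_outside x (Or.inl h)).symm
  · -- x = a : limit from the left
    subst h
    have h1 : Filter.Tendsto f (nhdsWithin x (Iio x)) (nhds (f x)) :=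
      (hf.cont.continuousAt).continuousWithinAt.tendsto
    have h2 : Filter.Tendsto f (nhdsWithin x (Iio x)) (nhds 0) := by
      apply Filter.Tendsto.congr' _ tendsto_const_nhds
      filter_upwards [self_mem_nhdsWithin] with y hy
      exact (hf.zero_outside y (Or.inl hy)).symm
    exact le_of_eq (tendsto_nhds_unique h2 h1)
  · rcases lt_trichotomy (x : EReal) b with h' | h' | h'
    · exact (hf.pos x h h').le
    · -- b = x : limit from the right
      have h1 : Filter.Tendsto f (nhdsWithin x (Ioi x)) (nhds (f x)) :=
        (hf.cont.continuousAt).continuousWithinAt.tendsto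
      have h2 : Filter.Tendsto f (nhdsWithin x (Ioi x)) (nhds 0) := by
        apply Filter.Tendsto.congr' _ tendsto_const_nhds
        filter_upwards [self_mem_nhdsWithin] with y hy
        refine (hf.zero_outside y (Or.inr ?_)).symm
        rw [← h']
        exact_mod_cast hy
      exact le_of_eq (tendsto_nhds_unique h2 h1)
    · exact le_of_eq (hf.zero_outside x (Or.inr h')).symm

lemma LR.fs_cont {f a b} (hf : IsLRExperiment f a b) (s : Fin 2) : Continuous (fs f s) := by
  unfold fs; split
  · exact hf.cont
  · exact continuous_id.mul hf.cont

lemma LR.fs_nonneg {f a b} (hf : IsLRExperiment f a b) (s : Fin 2) {x : ℝ} (hx : 0 ≤ x) :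
    0 ≤ fs f s x := by
  unfold fs; split
  · exact LR.f_nonneg hf x
  · exact mul_nonneg hx (LR.f_nonneg hf x)

lemma LR.fs_pos {f a b} (hf : IsLRExperiment f a b) (s : Fin 2) {x : ℝ}
    (h0 : 0 < x) (h1 : a < x) (h2 : (x : EReal) < b) : 0 < fs f s x := by
  unfold fs; split
  · exact hf.pos x h1 h2
  · exact mul_pos h0 (hf.pos x h1 h2)

lemma LR.Fs_eq {f : ℝ → ℝ} (s : Fin 2) (ℓ : ℝ) :
    Fs f s ℓ = ∫ u in (0:ℝ)..ℓ, fs f s u := by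
  unfold Fs fs F0 F1; split <;> rfl

lemma LR.hasDerivAt_Fs {f a b} (hf : IsLRExperiment f a b) (s : Fin 2) (ℓ : ℝ) :
    HasDerivAt (Fs f s) (fs f s ℓ) ℓ := by
  have hc := LR.fs_cont hf s
  have := integral_hasDerivAt_right (f := fs f s) (a := 0) (b := ℓ)
    (hc.intervalIntegrable _ _)
    hc.aestronglyMeasurable.stronglyMeasurableAtFilter
    hc.continuousAt
  exact this.congr_of_eventuallyEq (by filter_upwards with x; rw [LR.Fs_eq])

lemma LR.Fs_continuous {f a b} (hf : IsLRExperiment f a b) (s : Fin 2) :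
    Continuous (Fs f s) :=
  continuous_iff_continuousAt.2 fun ℓ => (LR.hasDerivAt_Fs hf s ℓ).continuousAt

lemma LR.int_total {f a b} (hf : IsLRExperiment f a b) (s : Fin 2) :
    (∫ ℓ in Ioi (0:ℝ), fs f s ℓ) = 1 := by
  unfold fs; split
  · exact hf.int_one
  · exact hf.int_mean

lemma LR.integrable {f a b} (hf : IsLRExperiment f a b) (s : Fin 2) :
    IntegrableOn (fs f s) (Ioi (0:ℝ)) := by
  by_contra h
  rw [IntegrableOn] at h
  have := MeasureTheory.integral_undef h
  rw [LR.int_total hf s] at this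
  norm_num at this

lemma ereal_between {x : ℝ} {b : EReal} (h : (x:EReal) < b) : ∃ c : ℝ, x < c ∧ (c:EReal) < b := by
  obtain ⟨c, hc1, hc2⟩ := exists_between h
  lift c to ℝ using ⟨ne_top_of_lt hc2, ne_bot_of_gt hc1⟩
  exact ⟨c, by exact_mod_cast hc1, hc2⟩

lemma LR.Fs_pos {f a b} (hf : IsLRExperiment f a b) (s : Fin 2) {ℓ : ℝ} (hℓ : a < ℓ) :
    0 < Fs f s ℓ := by
  obtain ⟨d, hd1, hd2⟩ := ereal_between hf.a_lt_b
  set c := min ℓ d with hc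
  have hac : a < c := lt_min hℓ hd1
  have hpos : ∀ u ∈ Ioo a c, 0 < fs f s u := by
    intro u hu
    have hud : u < d := lt_of_lt_of_le hu.2 (min_le_right _ _)
    exact LR.fs_pos hf s (lt_of_le_of_lt hf.a_nonneg hu.1) hu.1
      (lt_trans (by exact_mod_cast hud) hd2)
  have hg := LR.fs_cont hf s
  have h1 : (0:ℝ) < ∫ u in a..c, fs f s u :=
    intervalIntegral_pos_of_pos_on (hg.intervalIntegrable _ _) hpos hac
  rw [integral_of_le hac.le] at h1
  have h2 : (∫ u in Ioc a c, fs f s u) ≤ ∫ u in Ioc 0 ℓ, fs f s u := by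
    apply setIntegral_mono_set (hg.integrableOn_Ioc)
    · filter_upwards [ae_restrict_mem measurableSet_Ioc] with u hu
      exact LR.fs_nonneg hf s (le_of_lt hu.1)
    · refine HasSubset.Subset.eventuallyLE fun u hu => ?_
      exact ⟨lt_of_le_of_lt hf.a_nonneg hu.1, le_trans hu.2 (min_le_left _ _)⟩
  rw [LR.Fs_eq, integral_of_le (le_trans hf.a_nonneg hℓ.le)]
  linarith

lemma LR.Fs_lt_one {f a b} (hf : IsLRExperiment f a b) (s : Fin 2) {ℓ : ℝ}
    (hℓ0 : 0 ≤ ℓ) (hℓ : (ℓ : EReal) < b) : Fs f s ℓ < 1 := by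
  have hmb : ((max a ℓ : ℝ) : EReal) < b := by
    rcases max_cases a ℓ with ⟨h1, _⟩ | ⟨h1, _⟩ <;> rw [h1]
    · exact hf.a_lt_b
    · exact hℓ
  obtain ⟨c, hc1, hc2⟩ := ereal_between hmb
  have hg := LR.fs_cont hf s
  have hpos : ∀ u ∈ Ioo (max a ℓ) c, 0 < fs f s u := by
    intro u hu
    have h0u : 0 ≤ max a ℓ := le_trans hℓ0 (le_max_right a ℓ)
    have hau : a ≤ max a ℓ := le_max_left a ℓ
    exact LR.fs_pos hf s (lt_of_le_of_lt h0u hu.1) (lt_of_le_of_lt hau hu.1)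
      (lt_trans (by exact_mod_cast hu.2) hc2)
  have h1 : (0:ℝ) < ∫ u in (max a ℓ)..c, fs f s u :=
    intervalIntegral_pos_of_pos_on (hg.intervalIntegrable _ _) hpos hc1
  rw [integral_of_le hc1.le] at h1
  have hint := LR.integrable hf s
  have h2 : (∫ u in Ioc (max a ℓ) c, fs f s u) ≤ ∫ u in Ioi ℓ, fs f s u := by
    apply setIntegral_mono_set (hint.mono_set (Ioi_subset_Ioi hℓ0))
    · filter_upwards [ae_restrict_mem measurableSet_Ioi] with u hu
      exact LR.fs_nonneg hf s (le_trans hℓ0 (le_of_lt hu))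
    · refine HasSubset.Subset.eventuallyLE fun u hu => ?_
      exact lt_of_le_of_lt (le_max_right _ _) hu.1
  have hsplit : (∫ u in Ioc 0 ℓ, fs f s u) + (∫ u in Ioi ℓ, fs f s u)
      = ∫ u in Ioi (0:ℝ), fs f s u := by
    rw [← setIntegral_union (Ioc_disjoint_Ioi le_rfl) measurableSet_Ioi
      (hint.mono_set Ioc_subset_Ioi_self) (hint.mono_set (Ioi_subset_Ioi hℓ0))]
    rw [Ioc_union_Ioi_eq_Ioi hℓ0]
  rw [LR.int_total hf s] at hsplit
  rw [LR.Fs_eq, integral_of_le hℓ0]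
  linarith


lemma betaOf_pos {μ x : ℝ} (hμ0 : 0 < μ) (hμ1 : μ < 1) (hx : 0 < x) : 0 < betaOf μ x := by
  unfold betaOf
  apply div_pos (mul_pos hμ0 hx) (by nlinarith)

lemma betaOf_lt_one {μ x : ℝ} (hμ0 : 0 < μ) (hμ1 : μ < 1) (hx : 0 ≤ x) : betaOf μ x < 1 := by
  unfold betaOf
  rw [div_lt_one (by nlinarith)]
  linarith

lemma betaOf_mono {μ x y : ℝ} (hμ0 : 0 < μ) (hμ1 : μ < 1) (hx : 0 ≤ x) (hxy : x < y) :
    betaOf μ x < betaOf μ y := by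
  unfold betaOf
  rw [div_lt_div_iff₀ (by nlinarith) (by nlinarith)]
  nlinarith [mul_pos (mul_pos hμ0 (by linarith : (0:ℝ) < 1 - μ)) (by linarith : (0:ℝ) < y - x)]

lemma zOf_betaOf {μ x : ℝ} (hμ0 : 0 < μ) (hμ1 : μ < 1) (hx : 0 ≤ x) :
    zOf μ (betaOf μ x) = x := by
  unfold zOf betaOf
  have h1 : μ * x + 1 - μ > 0 := by nlinarith
  have h2 : 1 - μ * x / (μ * x + 1 - μ) = (1 - μ) / (μ * x + 1 - μ) := by
    field_simp
    ring
  rw [h2]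
  have hD : μ * x + 1 - μ ≠ 0 := ne_of_gt h1
  have hμ : μ ≠ 0 := ne_of_gt hμ0
  have hμ' : 1 - μ ≠ 0 := by linarith
  field_simp

lemma zOf_mono {μ x y : ℝ} (hμ0 : 0 < μ) (hμ1 : μ < 1) (hx : 0 ≤ x) (hxy : x < y)
    (hy : y < 1) : zOf μ x < zOf μ y := by
  unfold zOf
  rw [div_lt_div_iff₀ (by nlinarith) (by nlinarith)]
  nlinarith [mul_pos (mul_pos hμ0 (by linarith : (0:ℝ) < 1 - μ)) (by linarith : (0:ℝ) < y - x)]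

lemma frac_lt {p a1 b1 a2 b2 : ℝ} (hp0 : 0 < p) (hp1 : p < 1) (ha1 : 0 < a1) (ha2 : 0 < a2)
    (hb1 : 0 < b1) (hb2 : 0 < b2) (h : b1 * a2 < b2 * a1) :
    a2 / (p * a2 + (1 - p) * b2) < a1 / (p * a1 + (1 - p) * b1) := by
  have d1 : 0 < p * a1 + (1 - p) * b1 := by nlinarith
  have d2 : 0 < p * a2 + (1 - p) * b2 := by nlinarith
  rw [div_lt_div_iff₀ d2 d1]
  nlinarith

lemma ratio_strictMonoOn {N D n d : ℝ → ℝ} {A B : ℝ}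
    (hN : ∀ ℓ, HasDerivAt N (n ℓ) ℓ) (hD : ∀ ℓ, HasDerivAt D (d ℓ) ℓ)
    (hDpos : ∀ ℓ ∈ Ioo A B, 0 < D ℓ)
    (hcross : ∀ ℓ ∈ Ioo A B, d ℓ * N ℓ < n ℓ * D ℓ) :
    StrictMonoOn (fun ℓ => N ℓ / D ℓ) (Ioo A B) := by
  apply strictMonoOn_of_deriv_pos (convex_Ioo A B)
  · apply ContinuousOn.div
    · exact fun x _ => (hN x).continuousAt.continuousWithinAt
    · exact fun x _ => (hD x).continuousAt.continuousWithinAt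
    · exact fun x hx => ne_of_gt (hDpos x hx)
  · intro x hx
    rw [interior_Ioo] at hx
    have hder : HasDerivAt (fun ℓ => N ℓ / D ℓ)
        ((n x * D x - N x * d x) / D x ^ 2) x :=
      (hN x).div (hD x) (ne_of_gt (hDpos x hx))
    rw [hder.deriv]
    apply div_pos (by nlinarith [hcross x hx]) (pow_pos (hDpos x hx) 2)

/-- Existence and uniqueness of the informative-equilibrium belief cutoff: if the
crossing beliefs satisfy `β†_1 < β†_0`, the indifference equation has a unique solution
in `(β†_1, β†_0)`. -/
theorem stmt_4 (fh fl : ℝ → ℝ) (a_h a_l b_l : ℝ) (b_h : EReal)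
    (hh : IsLRExperiment fh a_h b_h) (hl : IsLRExperiment fl a_l (b_l : EReal))
    (hab : a_h < a_l) (hbb : (b_l : EReal) < b_h)
    (hdom : Noisier fh fl a_l b_l)
    (μ : ℝ) (hμ : μ ∈ Set.Ico (1/2 : ℝ) 1)
    (p : ℝ) (hp : p ∈ Set.Ioo (0:ℝ) 1)
    (βd0 βd1 : ℝ)
    (hc0 : IsCrossingBelief fh fl a_h a_l b_l b_h μ 0 βd0)
    (hc1 : IsCrossingBelief fh fl a_h a_l b_l b_h μ 1 βd1)
    (hlt : βd1 < βd0) :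
    ∃! β : ℝ, β ∈ Set.Ioo βd1 βd0 ∧
      indiffLHS fh fl μ p β = indiffRHS fh fl μ p β := by
  obtain ⟨hμh, hμ1⟩ := hμ
  have hμ0 : 0 < μ := by linarith
  obtain ⟨hp0, hp1⟩ := hp
  obtain ⟨hc0mem, hc0sign⟩ := hc0
  obtain ⟨hc1mem, hc1sign⟩ := hc1
  have hal0 : 0 < a_l := lt_of_le_of_lt hh.a_nonneg hab
  have halb : a_l < b_l := by exact_mod_cast hl.a_lt_b
  have hba_pos : 0 < betaOf μ a_l := betaOf_pos hμ0 hμ1 hal0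
  have hbb_lt1 : betaOf μ b_l < 1 := betaOf_lt_one hμ0 hμ1 (by linarith)
  have hbab : betaOf μ a_h < betaOf μ a_l := betaOf_mono hμ0 hμ1 hh.a_nonneg hab
  -- basic facts about β in the interval
  have hmem : ∀ β ∈ Icc βd1 βd0, 0 < β ∧ β < 1 ∧ a_l < zOf μ β ∧ zOf μ β < b_l := by
    intro β hβ
    have h1 : betaOf μ a_l < β := lt_of_lt_of_le hc1mem.1 hβ.1
    have h2 : β < betaOf μ b_l := lt_of_le_of_lt hβ.2 hc0mem.2
    have hβ0 : 0 < β := lt_trans hba_pos h1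
    have hβ1 : β < 1 := lt_trans h2 hbb_lt1
    have hz1 : a_l < zOf μ β := by
      have := zOf_mono hμ0 hμ1 hba_pos.le h1 hβ1
      rwa [zOf_betaOf hμ0 hμ1 hal0.le] at this
    have hz2 : zOf μ β < b_l := by
      have := zOf_mono hμ0 hμ1 hβ0.le h2 hbb_lt1
      rwa [zOf_betaOf hμ0 hμ1 (by linarith : (0:ℝ) ≤ b_l)] at this
    exact ⟨hβ0, hβ1, hz1, hz2⟩
  -- H values are in (0,1) on the interval
  have hHfacts : ∀ s : Fin 2, ∀ β ∈ Icc βd1 βd0,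
      0 < H fh μ s β ∧ H fh μ s β < 1 ∧ 0 < H fl μ s β ∧ H fl μ s β < 1 := by
    intro s β hβ
    obtain ⟨hβ0, hβ1, hz1, hz2⟩ := hmem β hβ
    have hz0 : (0:ℝ) ≤ zOf μ β := by linarith
    have hzbl : ((zOf μ β : ℝ) : EReal) < (b_l : EReal) := by exact_mod_cast hz2
    have hzbh : ((zOf μ β : ℝ) : EReal) < b_h := lt_trans hzbl hbb
    exact ⟨LR.Fs_pos hh s (lt_trans hab hz1), LR.Fs_lt_one hh s hz0 hzbh,
      LR.Fs_pos hl s hz1, LR.Fs_lt_one hl s hz0 hzbl⟩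
  -- crossing consequences
  have hcross_pre : ∀ β ∈ Icc βd1 βd0,
      betaOf μ a_h < β ∧ β < 1 ∧ ((zOf μ β : ℝ) : EReal) < b_h := by
    intro β hβ
    obtain ⟨hβ0, hβ1, hz1, hz2⟩ := hmem β hβ
    have hzbl : ((zOf μ β : ℝ) : EReal) < (b_l : EReal) := by exact_mod_cast hz2
    exact ⟨lt_trans hbab (lt_of_lt_of_le hc1mem.1 hβ.1), hβ1, lt_trans hzbl hbb⟩
  have hIcc1 : βd1 ∈ Icc βd1 βd0 := ⟨le_refl _, hlt.le⟩
  have hIcc0 : βd0 ∈ Icc βd1 βd0 := ⟨hlt.le, le_refl _⟩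
  have heq1 : H fh μ 1 βd1 = H fl μ 1 βd1 := by
    obtain ⟨p1, p2, p3⟩ := hcross_pre βd1 hIcc1
    have := ((hc1sign βd1 p1 p2 p3).2.1 rfl)
    linarith
  have heq0 : H fh μ 0 βd0 = H fl μ 0 βd0 := by
    obtain ⟨p1, p2, p3⟩ := hcross_pre βd0 hIcc0
    have := ((hc0sign βd0 p1 p2 p3).2.1 rfl)
    linarith
  -- monotonicity of the likelihood-ratio CDF ratios
  have hFhpos : ∀ s : Fin 2, ∀ ℓ ∈ Ioo a_l b_l, 0 < Fs fh s ℓ := by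
    intro s ℓ hℓ
    exact LR.Fs_pos hh s (lt_trans hab hℓ.1)
  have hFlpos : ∀ s : Fin 2, ∀ ℓ ∈ Ioo a_l b_l, 0 < Fs fl s ℓ := by
    intro s ℓ hℓ
    exact LR.Fs_pos hl s hℓ.1
  have hFllt1 : ∀ s : Fin 2, ∀ ℓ ∈ Ioo a_l b_l, Fs fl s ℓ < 1 := by
    intro s ℓ hℓ
    exact LR.Fs_lt_one hl s (by linarith [hℓ.1]) (by exact_mod_cast hℓ.2)
  have hFhlt1 : ∀ s : Fin 2, ∀ ℓ ∈ Ioo a_l b_l, Fs fh s ℓ < 1 := by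
    intro s ℓ hℓ
    refine LR.Fs_lt_one hh s (by linarith [hℓ.1]) ?_
    exact lt_trans (by exact_mod_cast hℓ.2 : ((ℓ:ℝ):EReal) < (b_l : EReal)) hbb
  have hρ : ∀ s : Fin 2, StrictMonoOn (fun ℓ => Fs fl s ℓ / Fs fh s ℓ) (Ioo a_l b_l) := by
    intro s
    apply ratio_strictMonoOn (fun ℓ => LR.hasDerivAt_Fs hl s ℓ)
      (fun ℓ => LR.hasDerivAt_Fs hh s ℓ) (hFhpos s)
    intro ℓ hℓ
    have hd := (hdom s ℓ hℓ.1 hℓ.2).1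
    rw [gt_iff_lt, div_lt_div_iff₀ (hFhpos s ℓ hℓ) (hFlpos s ℓ hℓ)] at hd
    linarith
  have hσ : ∀ s : Fin 2,
      StrictMonoOn (fun ℓ => (1 - Fs fh s ℓ) / (1 - Fs fl s ℓ)) (Ioo a_l b_l) := by
    intro s
    apply ratio_strictMonoOn
      (fun ℓ => (LR.hasDerivAt_Fs hh s ℓ).const_sub 1)
      (fun ℓ => (LR.hasDerivAt_Fs hl s ℓ).const_sub 1)
      (fun ℓ hℓ => by linarith [hFllt1 s ℓ hℓ])
    intro ℓ hℓ
    have hd := (hdom s ℓ hℓ.1 hℓ.2).2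
    rw [gt_iff_lt, div_lt_div_iff₀ (by linarith [hFhlt1 s ℓ hℓ])
      (by linarith [hFllt1 s ℓ hℓ])] at hd
    nlinarith [hd]
  -- z is strictly monotone on the interval, mapping into (a_l, b_l)
  have hzmono : ∀ β1 ∈ Icc βd1 βd0, ∀ β2 ∈ Icc βd1 βd0, β1 < β2 → zOf μ β1 < zOf μ β2 := by
    intro β1 h1 β2 h2 h12
    exact zOf_mono hμ0 hμ1 (hmem β1 h1).1.le h12 (hmem β2 h2).2.1
  have hzmem : ∀ β ∈ Icc βd1 βd0, zOf μ β ∈ Ioo a_l b_l := by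
    intro β hβ
    exact ⟨(hmem β hβ).2.2.1, (hmem β hβ).2.2.2⟩
  -- the four reputational payoff pieces and their monotonicity
  have hXanti : ∀ s : Fin 2, ∀ β1 ∈ Icc βd1 βd0, ∀ β2 ∈ Icc βd1 βd0, β1 < β2 →
      H fh μ s β2 / (p * H fh μ s β2 + (1 - p) * H fl μ s β2)
        < H fh μ s β1 / (p * H fh μ s β1 + (1 - p) * H fl μ s β1) := by
    intro s β1 h1 β2 h2 h12
    obtain ⟨ha1, _, hb1, _⟩ := hHfacts s β1 h1
    obtain ⟨ha2, _, hb2, _⟩ := hHfacts s β2 h2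
    have key := hρ s (hzmem β1 h1) (hzmem β2 h2) (hzmono β1 h1 β2 h2 h12)
    simp only [] at key
    rw [div_lt_div_iff₀ (hFhpos s _ (hzmem β1 h1)) (hFhpos s _ (hzmem β2 h2))] at key
    exact frac_lt hp0 hp1 ha1 ha2 hb1 hb2 key
  have hYmono : ∀ s : Fin 2, ∀ β1 ∈ Icc βd1 βd0, ∀ β2 ∈ Icc βd1 βd0, β1 < β2 →
      (1 - H fh μ s β1) / (p * (1 - H fh μ s β1) + (1 - p) * (1 - H fl μ s β1))
        < (1 - H fh μ s β2) / (p * (1 - H fh μ s β2) + (1 - p) * (1 - H fl μ s β2)) := by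
    intro s β1 h1 β2 h2 h12
    obtain ⟨_, ha1, _, hb1⟩ := hHfacts s β1 h1
    obtain ⟨_, ha2, _, hb2⟩ := hHfacts s β2 h2
    have key := hσ s (hzmem β1 h1) (hzmem β2 h2) (hzmono β1 h1 β2 h2 h12)
    simp only [] at key
    rw [div_lt_div_iff₀ (by linarith [hFllt1 s _ (hzmem β1 h1)])
      (by linarith [hFllt1 s _ (hzmem β2 h2)])] at key
    refine frac_lt hp0 hp1 (by linarith) (by linarith) (by linarith) (by linarith) ?_
    · show (1 - H fl μ s β2) * (1 - H fh μ s β1) < (1 - H fl μ s β1) * (1 - H fh μ s β2)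
      change (1 - Fs fh s (zOf μ β1)) * (1 - Fs fl s (zOf μ β2))
        < (1 - Fs fh s (zOf μ β2)) * (1 - Fs fl s (zOf μ β1)) at key
      change (1 - Fs fl s (zOf μ β2)) * (1 - Fs fh s (zOf μ β1))
        < (1 - Fs fl s (zOf μ β1)) * (1 - Fs fh s (zOf μ β2))
      nlinarith [key]
  -- abbreviations
  set A : ℝ → ℝ := fun β =>
    (1 - H fh μ 1 β) / (p * (1 - H fh μ 1 β) + (1 - p) * (1 - H fl μ 1 β))
      - H fh μ 1 β / (p * H fh μ 1 β + (1 - p) * H fl μ 1 β) with hAdef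
  set B : ℝ → ℝ := fun β =>
    H fh μ 0 β / (p * H fh μ 0 β + (1 - p) * H fl μ 0 β)
      - (1 - H fh μ 0 β) / (p * (1 - H fh μ 0 β) + (1 - p) * (1 - H fl μ 0 β)) with hBdef
  have hLHS : ∀ β, indiffLHS fh fl μ p β = β * A β := fun β => rfl
  have hRHS : ∀ β, indiffRHS fh fl μ p β = (1 - β) * B β := fun β => rfl
  -- A vanishes at βd1, B vanishes at βd0
  have hA1 : A βd1 = 0 := by
    obtain ⟨hHh0, hHh1, _, _⟩ := hHfacts 1 βd1 hIcc1
    rw [hAdef]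
    simp only []
    rw [← heq1]
    rw [show p * (1 - H fh μ 1 βd1) + (1 - p) * (1 - H fh μ 1 βd1) = 1 - H fh μ 1 βd1 by ring]
    rw [show p * H fh μ 1 βd1 + (1 - p) * H fh μ 1 βd1 = H fh μ 1 βd1 by ring]
    rw [div_self (by linarith), div_self (ne_of_gt hHh0)]
    ring
  have hB0 : B βd0 = 0 := by
    obtain ⟨hHh0, hHh1, _, _⟩ := hHfacts 0 βd0 hIcc0
    rw [hBdef]
    simp only []
    rw [← heq0]
    rw [show p * (1 - H fh μ 0 βd0) + (1 - p) * (1 - H fh μ 0 βd0) = 1 - H fh μ 0 βd0 by ring]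
    rw [show p * H fh μ 0 βd0 + (1 - p) * H fh μ 0 βd0 = H fh μ 0 βd0 by ring]
    rw [div_self (ne_of_gt hHh0), div_self (by linarith)]
    ring
  -- A strictly increasing, B strictly decreasing on the interval
  have hAmono : ∀ β1 ∈ Icc βd1 βd0, ∀ β2 ∈ Icc βd1 βd0, β1 < β2 → A β1 < A β2 := by
    intro β1 h1 β2 h2 h12
    have := hYmono 1 β1 h1 β2 h2 h12
    have := hXanti 1 β1 h1 β2 h2 h12
    rw [hAdef]
    simp only []
    linarith
  have hBanti : ∀ β1 ∈ Icc βd1 βd0, ∀ β2 ∈ Icc βd1 βd0, β1 < β2 → B β2 < B β1 := by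
    intro β1 h1 β2 h2 h12
    have := hYmono 0 β1 h1 β2 h2 h12
    have := hXanti 0 β1 h1 β2 h2 h12
    rw [hBdef]
    simp only []
    linarith
  have hAnonneg : ∀ β ∈ Icc βd1 βd0, 0 ≤ A β := by
    intro β hβ
    rcases eq_or_lt_of_le hβ.1 with h | h
    · rw [← h, hA1]
    · linarith [hAmono βd1 hIcc1 β hβ h, hA1]
  have hBnonneg : ∀ β ∈ Icc βd1 βd0, 0 ≤ B β := by
    intro β hβ
    rcases eq_or_lt_of_le hβ.2 with h | h
    · rw [h, hB0]
    · linarith [hBanti β hβ βd0 hIcc0 h, hB0]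
  -- the difference function
  set g : ℝ → ℝ := fun β => indiffLHS fh fl μ p β - indiffRHS fh fl μ p β with hgdef
  have hgval : ∀ β, g β = β * A β - (1 - β) * B β := by
    intro β
    rw [hgdef]
    simp only []
    rw [hLHS, hRHS]
  have hgmono : StrictMonoOn g (Icc βd1 βd0) := by
    intro β1 h1 β2 h2 h12
    have hA12 := hAmono β1 h1 β2 h2 h12
    have hB12 := hBanti β1 h1 β2 h2 h12
    have hA1n := hAnonneg β1 h1
    have hB2n := hBnonneg β2 h2
    have hβ1 := hmem β1 h1
    have hβ2 := hmem β2 h2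
    rw [hgval, hgval]
    have e1 : β1 * A β1 ≤ β2 * A β1 := mul_le_mul_of_nonneg_right h12.le hA1n
    have e2 : β2 * A β1 < β2 * A β2 := by
      exact mul_lt_mul_of_pos_left hA12 hβ2.1
    have e3 : (1 - β2) * B β2 ≤ (1 - β1) * B β2 :=
      mul_le_mul_of_nonneg_right (by linarith [hβ1.1]) hB2n
    have e4 : (1 - β1) * B β2 < (1 - β1) * B β1 :=
      mul_lt_mul_of_pos_left hB12 (by linarith [hβ1.2.1])
    linarith
  -- endpoint signs
  have hgneg : g βd1 < 0 := by
    rw [hgval, hA1]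
    have hBpos : 0 < B βd1 := by
      have := hBanti βd1 hIcc1 βd0 hIcc0 hlt
      linarith [hB0]
    have h1 : (0:ℝ) < 1 - βd1 := by linarith [(hmem βd1 hIcc1).2.1]
    nlinarith
  have hgpos : 0 < g βd0 := by
    rw [hgval, hB0]
    have hApos : 0 < A βd0 := by
      have := hAmono βd1 hIcc1 βd0 hIcc0 hlt
      linarith [hA1]
    nlinarith [(hmem βd0 hIcc0).1]
  -- continuity of g on the interval
  have hzc : ContinuousOn (zOf μ) (Icc βd1 βd0) := by
    unfold zOf
    apply ContinuousOn.div (by fun_prop) (by fun_prop)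
    intro β hβ
    have := (hmem β hβ).2.1
    exact ne_of_gt (mul_pos hμ0 (by linarith))
  have hHc : ∀ (f' : ℝ → ℝ) (a' : ℝ) (b' : EReal), IsLRExperiment f' a' b' → ∀ s : Fin 2,
      ContinuousOn (H f' μ s) (Icc βd1 βd0) :=
    fun f' a' b' hf' s => (LR.Fs_continuous hf' s).comp_continuousOn hzc
  have hchh0 := hHc fh a_h b_h hh 0
  have hchh1 := hHc fh a_h b_h hh 1
  have hchl0 := hHc fl a_l (b_l : EReal) hl 0
  have hchl1 := hHc fl a_l (b_l : EReal) hl 1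
  have hden : ∀ s : Fin 2, ∀ β ∈ Icc βd1 βd0,
      0 < p * H fh μ s β + (1 - p) * H fl μ s β ∧
      0 < p * (1 - H fh μ s β) + (1 - p) * (1 - H fl μ s β) := by
    intro s β hβ
    obtain ⟨h1, h2, h3, h4⟩ := hHfacts s β hβ
    constructor <;> nlinarith
  have hgcont : ContinuousOn g (Icc βd1 βd0) := by
    rw [hgdef]
    have cL : ContinuousOn (fun β => indiffLHS fh fl μ p β) (Icc βd1 βd0) := by
      apply ContinuousOn.mul continuousOn_id
      apply ContinuousOn.sub
      · exact ContinuousOn.div (by fun_prop) (by fun_prop)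
          (fun β hβ => ne_of_gt (hden 1 β hβ).2)
      · exact ContinuousOn.div hchh1 (by fun_prop)
          (fun β hβ => ne_of_gt (hden 1 β hβ).1)
    have cR : ContinuousOn (fun β => indiffRHS fh fl μ p β) (Icc βd1 βd0) := by
      apply ContinuousOn.mul (by fun_prop)
      apply ContinuousOn.sub
      · exact ContinuousOn.div hchh0 (by fun_prop)
          (fun β hβ => ne_of_gt (hden 0 β hβ).1)
      · exact ContinuousOn.div (by fun_prop) (by fun_prop)
          (fun β hβ => ne_of_gt (hden 0 β hβ).2)
    exact cL.sub cR
  -- intermediate value theorem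
  have hIvt := intermediate_value_Ioo hlt.le hgcont
  have h0mem : (0:ℝ) ∈ Ioo (g βd1) (g βd0) := ⟨hgneg, hgpos⟩
  obtain ⟨β₀, hβ₀mem, hβ₀eq⟩ := hIvt h0mem
  refine ⟨β₀, ⟨hβ₀mem, ?_⟩, ?_⟩
  · have : g β₀ = 0 := hβ₀eq
    rw [hgval] at this
    rw [hLHS, hRHS]
    linarith
  · rintro y ⟨hymem, hyeq⟩
    have hgy : g y = 0 := by
      rw [hgdef]
      simp only []
      rw [hyeq]
      ring
    have hgβ₀ : g β₀ = 0 := hβ₀eq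
    exact hgmono.injOn (Ioo_subset_Icc_self hymem) (Ioo_subset_Icc_self hβ₀mem)
      (by rw [hgy, hgβ₀])
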